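/- Let n ≥ 5 and let a,b,c,d,e ∈ {1,…,n} be distinct. There exists a connected acyclic hypergraph with vertex set [n]^(2) (ordered pairs of distinct elements of {1,…,n}) such that one hyperedge is the 6-element set T(a,b,e) ∪ T(c,d,e), and all other hyperedges are triangles T(x,y,z) for triples (x,y,z) of distinct elements. -/

import Mathlib

/-- `PairsSet n` is `[n]^(2)`, the set of ordered pairs of distinct elements of `{1,…,n}`. -/
def PairsSet (n : ℕ) : Set (ℕ × ℕ) :=
  {p | p.1 ≠ p.2 ∧ 1 ≤ p.1 ∧ p.1 ≤ n ∧ 1 ≤ p.2 ∧ p.2 ≤ n}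

/-- The triangle `T(a,b,c) = {(a,b),(b,c),(c,a)}`. -/
def Tset (a b c : ℕ) : Set (ℕ × ℕ) := {(a, b), (b, c), (c, a)}

/-- `h` is a triangle `T(a,b,c)` for some triple of distinct elements of `{1,…,n}`. -/
def IsTriangle (n : ℕ) (h : Set (ℕ × ℕ)) : Prop :=
  ∃ a b c : ℕ, a ≠ b ∧ b ≠ c ∧ a ≠ c ∧ 1 ≤ a ∧ a ≤ n ∧ 1 ≤ b ∧ b ≤ n ∧ 1 ≤ c ∧ c ≤ n ∧
    h = Tset a b c

/-- The bipartite incidence graph of a hypergraph with vertex set `V` and hyperedge set `H`: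
vertices on one side, hyperedges on the other, adjacency given by membership. -/
def incGraph (V : Set (ℕ × ℕ)) (H : Set (Set (ℕ × ℕ))) : SimpleGraph (↥V ⊕ ↥H) where
  Adj x y :=
    (∃ v h, x = Sum.inl v ∧ y = Sum.inr h ∧ (v : ℕ × ℕ) ∈ (h : Set (ℕ × ℕ))) ∨
    (∃ v h, y = Sum.inl v ∧ x = Sum.inr h ∧ (v : ℕ × ℕ) ∈ (h : Set (ℕ × ℕ)))
  symm := by
    constructor
    rintro x y (⟨v, h, rfl, rfl, hm⟩ | ⟨v, h, rfl, rfl, hm⟩)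
    · exact Or.inr ⟨v, h, rfl, rfl, hm⟩
    · exact Or.inl ⟨v, h, rfl, rfl, hm⟩
  loopless := by constructor; rintro x (⟨v, h, rfl, hy, -⟩ | ⟨v, h, hy, rfl, -⟩) <;> simp at hy



def Sp (a b c d e x : ℕ) : Prop := x = a ∨ x = b ∨ x = c ∨ x = d ∨ x = e
instance instDecSp (a b c d e x : ℕ) : Decidable (Sp a b c d e x) := by unfold Sp; infer_instance

def fv (a b c d e x : ℕ) : ℕ := if Sp a b c d e x then 0 else x
def PS (n a b c d e r : ℕ) : Set ℕ := {x | (1 ≤ x ∧ x ≤ n) ∧ x ≠ r ∧ (Sp a b c d e x ∨ x < r)}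
noncomputable def gp (n a b c d e r : ℕ) : Equiv.Perm ℕ :=
  ((Set.to_countable (PS n a b c d e r)).exists_cycleOn).choose
lemma gp_spec (n a b c d e r : ℕ) : (gp n a b c d e r).IsCycleOn (PS n a b c d e r) :=
  ((Set.to_countable (PS n a b c d e r)).exists_cycleOn).choose_spec.1

def Dcore (a b c d e : ℕ) (v : ℕ × ℕ) : ℕ :=
  if v = (b,c) ∨ v = (c,a) then 1
  else if v = (b,d) ∨ v = (d,a) then 2
  else if v = (a,c) ∨ v = (c,e) then 3
  else if v = (c,b) ∨ v = (b,a) then 4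
  else if v = (a,d) ∨ v = (d,b) then 5
  else if v = (a,e) ∨ v = (e,b) then 6
  else if v = (e,d) ∨ v = (d,c) then 7
  else 0

def tcore (a b c d e : ℕ) (v : ℕ × ℕ) : Set (ℕ × ℕ) :=
  if v = (b,c) ∨ v = (c,a) then Tset a b c
  else if v = (b,d) ∨ v = (d,a) then Tset a b d
  else if v = (a,c) ∨ v = (c,e) then Tset a c e
  else if v = (c,b) ∨ v = (b,a) then Tset a c b
  else if v = (a,d) ∨ v = (d,b) then Tset a d b
  else if v = (a,e) ∨ v = (e,b) then Tset a e b
  else Tset c e d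

def Dd (a b c d e : ℕ) (v : ℕ × ℕ) : ℕ :=
  if Sp a b c d e v.1 ∧ Sp a b c d e v.2 then Dcore a b c d e v
  else 100 + max (fv a b c d e v.1) (fv a b c d e v.2)

noncomputable def tau (n a b c d e : ℕ) (v : ℕ × ℕ) : Set (ℕ × ℕ) :=
  if Sp a b c d e v.1 ∧ Sp a b c d e v.2 then tcore a b c d e v
  else if fv a b c d e v.2 < fv a b c d e v.1 then Tset v.1 v.2 (gp n a b c d e v.1 v.2)
  else Tset v.2 ((gp n a b c d e v.2)⁻¹ v.1) v.1

lemma Dcore_le (a b c d e : ℕ) (v : ℕ × ℕ) : Dcore a b c d e v ≤ 7 := by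
  unfold Dcore; split_ifs <;> omega


noncomputable def DHf (a b c d e : ℕ) (h : Set (ℕ × ℕ)) : ℕ :=
  sInf {k | ∀ u ∈ h, Dd a b c d e u ≤ k}

lemma DHf_eq {a b c d e : ℕ} {h : Set (ℕ × ℕ)} {m : ℕ}
    (h1 : ∀ u ∈ h, Dd a b c d e u ≤ m) (h2 : ∃ u ∈ h, Dd a b c d e u = m) :
    DHf a b c d e h = m := by
  apply le_antisymm
  · exact Nat.sInf_le h1
  · obtain ⟨u, hu, hDu⟩ := h2
    have hne : {k | ∀ u ∈ h, Dd a b c d e u ≤ k}.Nonempty := ⟨m, h1⟩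
    have hmem := Nat.sInf_mem hne
    exact hDu ▸ hmem u hu

section Master

variable {n a b c d e : ℕ}

theorem master (h5 : 5 ≤ n)
    (ha : 1 ≤ a) (ha' : a ≤ n) (hb : 1 ≤ b) (hb' : b ≤ n) (hc : 1 ≤ c) (hc' : c ≤ n)
    (hd : 1 ≤ d) (hd' : d ≤ n) (he : 1 ≤ e) (he' : e ≤ n)
    (hab : a ≠ b) (hac : a ≠ c) (had : a ≠ d) (hae : a ≠ e) (hbc : b ≠ c)
    (hbd : b ≠ d) (hbe : b ≠ e) (hcd : c ≠ d) (hce : c ≠ e) (hde : d ≠ e) :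
    ∀ v ∈ PairsSet n, v ∉ (Tset a b e ∪ Tset c d e) →
      v ∈ tau n a b c d e v ∧
      IsTriangle n (tau n a b c d e v) ∧
      ∃ A, A ∈ tau n a b c d e v ∧ A ∈ PairsSet n ∧
        Dd a b c d e A < Dd a b c d e v ∧
        ∀ w ∈ tau n a b c d e v, w ≠ A →
          (w ∈ PairsSet n ∧ w ∉ (Tset a b e ∪ Tset c d e) ∧
           Dd a b c d e w = Dd a b c d e v ∧ tau n a b c d e w = tau n a b c d e v) := by
  rintro ⟨p, q⟩ ⟨hv12, hv1l, hv1u, hv2l, hv2u⟩ hvE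
  simp only at hv12 hv1l hv1u hv2l hv2u
  by_cases hS : Sp a b c d e p ∧ Sp a b c d e q
  · obtain ⟨hSp, hSq⟩ := hS
    rcases hSp with h1 | h1 | h1 | h1 | h1 <;> rcases hSq with h2 | h2 | h2 | h2 | h2 <;>
      rcases h1.symm with rfl <;> rcases h2.symm with rfl
    · exact absurd rfl hv12
    · exact absurd (show (a,b) ∈ Tset a b e ∪ Tset c d e by simp [Tset]) hvE
    · have htv : tau n a b c d e (a, c) = Tset a c e := by simp [Dcore, tcore, Dd, tau, fv, Sp, Tset, hab, hab.symm, hac, hac.symm, had, had.symm, hae, hae.symm, hbc, hbc.symm, hbd, hbd.symm, hbe, hbe.symm, hcd, hcd.symm, hce, hce.symm, hde, hde.symm, Prod.ext_iff]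
      refine ⟨?_, ?_, (e, a), ?_, ?_, ?_, ?_⟩
      · rw [htv]; simp [Tset]
      · rw [htv]
        exact ⟨a, c, e, hac, hce, hae, ha, ha', hc, hc', he, he', rfl⟩
      · rw [htv]; simp [Tset]
      · exact ⟨hae.symm, he, he', ha, ha'⟩
      · have e1 : Dd a b c d e (e, a) = 0 := by simp [Dcore, tcore, Dd, tau, fv, Sp, Tset, hab, hab.symm, hac, hac.symm, had, had.symm, hae, hae.symm, hbc, hbc.symm, hbd, hbd.symm, hbe, hbe.symm, hcd, hcd.symm, hce, hce.symm, hde, hde.symm, Prod.ext_iff]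
        have e2 : Dd a b c d e (a, c) = 3 := by simp [Dcore, tcore, Dd, tau, fv, Sp, Tset, hab, hab.symm, hac, hac.symm, had, had.symm, hae, hae.symm, hbc, hbc.symm, hbd, hbd.symm, hbe, hbe.symm, hcd, hcd.symm, hce, hce.symm, hde, hde.symm, Prod.ext_iff]
        omega
      · intro w hw hwA
        rw [htv] at hw
        simp only [Tset, Set.mem_insert_iff, Set.mem_singleton_iff] at hw
        rcases hw with rfl | rfl | rfl
        · exact ⟨⟨hac, ha, ha', hc, hc'⟩, hvE, rfl, rfl⟩
        · refine ⟨⟨hce, hc, hc', he, he'⟩, ?_, ?_, ?_⟩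
          · simp [Dcore, tcore, Dd, tau, fv, Sp, Tset, hab, hab.symm, hac, hac.symm, had, had.symm, hae, hae.symm, hbc, hbc.symm, hbd, hbd.symm, hbe, hbe.symm, hcd, hcd.symm, hce, hce.symm, hde, hde.symm, Prod.ext_iff]
          · have e1 : Dd a b c d e (c, e) = 3 := by simp [Dcore, tcore, Dd, tau, fv, Sp, Tset, hab, hab.symm, hac, hac.symm, had, had.symm, hae, hae.symm, hbc, hbc.symm, hbd, hbd.symm, hbe, hbe.symm, hcd, hcd.symm, hce, hce.symm, hde, hde.symm, Prod.ext_iff]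
            have e2 : Dd a b c d e (a, c) = 3 := by simp [Dcore, tcore, Dd, tau, fv, Sp, Tset, hab, hab.symm, hac, hac.symm, had, had.symm, hae, hae.symm, hbc, hbc.symm, hbd, hbd.symm, hbe, hbe.symm, hcd, hcd.symm, hce, hce.symm, hde, hde.symm, Prod.ext_iff]
            omega
          · have e1 : tau n a b c d e (c, e) = Tset a c e := by simp [Dcore, tcore, Dd, tau, fv, Sp, Tset, hab, hab.symm, hac, hac.symm, had, had.symm, hae, hae.symm, hbc, hbc.symm, hbd, hbd.symm, hbe, hbe.symm, hcd, hcd.symm, hce, hce.symm, hde, hde.symm, Prod.ext_iff]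
            rw [e1, htv]
        · exact absurd rfl hwA
    · have htv : tau n a b c d e (a, d) = Tset a d b := by simp [Dcore, tcore, Dd, tau, fv, Sp, Tset, hab, hab.symm, hac, hac.symm, had, had.symm, hae, hae.symm, hbc, hbc.symm, hbd, hbd.symm, hbe, hbe.symm, hcd, hcd.symm, hce, hce.symm, hde, hde.symm, Prod.ext_iff]
      refine ⟨?_, ?_, (b, a), ?_, ?_, ?_, ?_⟩
      · rw [htv]; simp [Tset]
      · rw [htv]
        exact ⟨a, d, b, had, hbd.symm, hab, ha, ha', hd, hd', hb, hb', rfl⟩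
      · rw [htv]; simp [Tset]
      · exact ⟨hab.symm, hb, hb', ha, ha'⟩
      · have e1 : Dd a b c d e (b, a) = 4 := by simp [Dcore, tcore, Dd, tau, fv, Sp, Tset, hab, hab.symm, hac, hac.symm, had, had.symm, hae, hae.symm, hbc, hbc.symm, hbd, hbd.symm, hbe, hbe.symm, hcd, hcd.symm, hce, hce.symm, hde, hde.symm, Prod.ext_iff]
        have e2 : Dd a b c d e (a, d) = 5 := by simp [Dcore, tcore, Dd, tau, fv, Sp, Tset, hab, hab.symm, hac, hac.symm, had, had.symm, hae, hae.symm, hbc, hbc.symm, hbd, hbd.symm, hbe, hbe.symm, hcd, hcd.symm, hce, hce.symm, hde, hde.symm, Prod.ext_iff]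
        omega
      · intro w hw hwA
        rw [htv] at hw
        simp only [Tset, Set.mem_insert_iff, Set.mem_singleton_iff] at hw
        rcases hw with rfl | rfl | rfl
        · exact ⟨⟨had, ha, ha', hd, hd'⟩, hvE, rfl, rfl⟩
        · refine ⟨⟨hbd.symm, hd, hd', hb, hb'⟩, ?_, ?_, ?_⟩
          · simp [Dcore, tcore, Dd, tau, fv, Sp, Tset, hab, hab.symm, hac, hac.symm, had, had.symm, hae, hae.symm, hbc, hbc.symm, hbd, hbd.symm, hbe, hbe.symm, hcd, hcd.symm, hce, hce.symm, hde, hde.symm, Prod.ext_iff]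
          · have e1 : Dd a b c d e (d, b) = 5 := by simp [Dcore, tcore, Dd, tau, fv, Sp, Tset, hab, hab.symm, hac, hac.symm, had, had.symm, hae, hae.symm, hbc, hbc.symm, hbd, hbd.symm, hbe, hbe.symm, hcd, hcd.symm, hce, hce.symm, hde, hde.symm, Prod.ext_iff]
            have e2 : Dd a b c d e (a, d) = 5 := by simp [Dcore, tcore, Dd, tau, fv, Sp, Tset, hab, hab.symm, hac, hac.symm, had, had.symm, hae, hae.symm, hbc, hbc.symm, hbd, hbd.symm, hbe, hbe.symm, hcd, hcd.symm, hce, hce.symm, hde, hde.symm, Prod.ext_iff]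
            omega
          · have e1 : tau n a b c d e (d, b) = Tset a d b := by simp [Dcore, tcore, Dd, tau, fv, Sp, Tset, hab, hab.symm, hac, hac.symm, had, had.symm, hae, hae.symm, hbc, hbc.symm, hbd, hbd.symm, hbe, hbe.symm, hcd, hcd.symm, hce, hce.symm, hde, hde.symm, Prod.ext_iff]
            rw [e1, htv]
        · exact absurd rfl hwA
    · have htv : tau n a b c d e (a, e) = Tset a e b := by simp [Dcore, tcore, Dd, tau, fv, Sp, Tset, hab, hab.symm, hac, hac.symm, had, had.symm, hae, hae.symm, hbc, hbc.symm, hbd, hbd.symm, hbe, hbe.symm, hcd, hcd.symm, hce, hce.symm, hde, hde.symm, Prod.ext_iff]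
      refine ⟨?_, ?_, (b, a), ?_, ?_, ?_, ?_⟩
      · rw [htv]; simp [Tset]
      · rw [htv]
        exact ⟨a, e, b, hae, hbe.symm, hab, ha, ha', he, he', hb, hb', rfl⟩
      · rw [htv]; simp [Tset]
      · exact ⟨hab.symm, hb, hb', ha, ha'⟩
      · have e1 : Dd a b c d e (b, a) = 4 := by simp [Dcore, tcore, Dd, tau, fv, Sp, Tset, hab, hab.symm, hac, hac.symm, had, had.symm, hae, hae.symm, hbc, hbc.symm, hbd, hbd.symm, hbe, hbe.symm, hcd, hcd.symm, hce, hce.symm, hde, hde.symm, Prod.ext_iff]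
        have e2 : Dd a b c d e (a, e) = 6 := by simp [Dcore, tcore, Dd, tau, fv, Sp, Tset, hab, hab.symm, hac, hac.symm, had, had.symm, hae, hae.symm, hbc, hbc.symm, hbd, hbd.symm, hbe, hbe.symm, hcd, hcd.symm, hce, hce.symm, hde, hde.symm, Prod.ext_iff]
        omega
      · intro w hw hwA
        rw [htv] at hw
        simp only [Tset, Set.mem_insert_iff, Set.mem_singleton_iff] at hw
        rcases hw with rfl | rfl | rfl
        · exact ⟨⟨hae, ha, ha', he, he'⟩, hvE, rfl, rfl⟩
        · refine ⟨⟨hbe.symm, he, he', hb, hb'⟩, ?_, ?_, ?_⟩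
          · simp [Dcore, tcore, Dd, tau, fv, Sp, Tset, hab, hab.symm, hac, hac.symm, had, had.symm, hae, hae.symm, hbc, hbc.symm, hbd, hbd.symm, hbe, hbe.symm, hcd, hcd.symm, hce, hce.symm, hde, hde.symm, Prod.ext_iff]
          · have e1 : Dd a b c d e (e, b) = 6 := by simp [Dcore, tcore, Dd, tau, fv, Sp, Tset, hab, hab.symm, hac, hac.symm, had, had.symm, hae, hae.symm, hbc, hbc.symm, hbd, hbd.symm, hbe, hbe.symm, hcd, hcd.symm, hce, hce.symm, hde, hde.symm, Prod.ext_iff]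
            have e2 : Dd a b c d e (a, e) = 6 := by simp [Dcore, tcore, Dd, tau, fv, Sp, Tset, hab, hab.symm, hac, hac.symm, had, had.symm, hae, hae.symm, hbc, hbc.symm, hbd, hbd.symm, hbe, hbe.symm, hcd, hcd.symm, hce, hce.symm, hde, hde.symm, Prod.ext_iff]
            omega
          · have e1 : tau n a b c d e (e, b) = Tset a e b := by simp [Dcore, tcore, Dd, tau, fv, Sp, Tset, hab, hab.symm, hac, hac.symm, had, had.symm, hae, hae.symm, hbc, hbc.symm, hbd, hbd.symm, hbe, hbe.symm, hcd, hcd.symm, hce, hce.symm, hde, hde.symm, Prod.ext_iff]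
            rw [e1, htv]
        · exact absurd rfl hwA
    · have htv : tau n a b c d e (b, a) = Tset a c b := by simp [Dcore, tcore, Dd, tau, fv, Sp, Tset, hab, hab.symm, hac, hac.symm, had, had.symm, hae, hae.symm, hbc, hbc.symm, hbd, hbd.symm, hbe, hbe.symm, hcd, hcd.symm, hce, hce.symm, hde, hde.symm, Prod.ext_iff]
      refine ⟨?_, ?_, (a, c), ?_, ?_, ?_, ?_⟩
      · rw [htv]; simp [Tset]
      · rw [htv]
        exact ⟨a, c, b, hac, hbc.symm, hab, ha, ha', hc, hc', hb, hb', rfl⟩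
      · rw [htv]; simp [Tset]
      · exact ⟨hac, ha, ha', hc, hc'⟩
      · have e1 : Dd a b c d e (a, c) = 3 := by simp [Dcore, tcore, Dd, tau, fv, Sp, Tset, hab, hab.symm, hac, hac.symm, had, had.symm, hae, hae.symm, hbc, hbc.symm, hbd, hbd.symm, hbe, hbe.symm, hcd, hcd.symm, hce, hce.symm, hde, hde.symm, Prod.ext_iff]
        have e2 : Dd a b c d e (b, a) = 4 := by simp [Dcore, tcore, Dd, tau, fv, Sp, Tset, hab, hab.symm, hac, hac.symm, had, had.symm, hae, hae.symm, hbc, hbc.symm, hbd, hbd.symm, hbe, hbe.symm, hcd, hcd.symm, hce, hce.symm, hde, hde.symm, Prod.ext_iff]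
        omega
      · intro w hw hwA
        rw [htv] at hw
        simp only [Tset, Set.mem_insert_iff, Set.mem_singleton_iff] at hw
        rcases hw with rfl | rfl | rfl
        · exact absurd rfl hwA
        · refine ⟨⟨hbc.symm, hc, hc', hb, hb'⟩, ?_, ?_, ?_⟩
          · simp [Dcore, tcore, Dd, tau, fv, Sp, Tset, hab, hab.symm, hac, hac.symm, had, had.symm, hae, hae.symm, hbc, hbc.symm, hbd, hbd.symm, hbe, hbe.symm, hcd, hcd.symm, hce, hce.symm, hde, hde.symm, Prod.ext_iff]
          · have e1 : Dd a b c d e (c, b) = 4 := by simp [Dcore, tcore, Dd, tau, fv, Sp, Tset, hab, hab.symm, hac, hac.symm, had, had.symm, hae, hae.symm, hbc, hbc.symm, hbd, hbd.symm, hbe, hbe.symm, hcd, hcd.symm, hce, hce.symm, hde, hde.symm, Prod.ext_iff]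
            have e2 : Dd a b c d e (b, a) = 4 := by simp [Dcore, tcore, Dd, tau, fv, Sp, Tset, hab, hab.symm, hac, hac.symm, had, had.symm, hae, hae.symm, hbc, hbc.symm, hbd, hbd.symm, hbe, hbe.symm, hcd, hcd.symm, hce, hce.symm, hde, hde.symm, Prod.ext_iff]
            omega
          · have e1 : tau n a b c d e (c, b) = Tset a c b := by simp [Dcore, tcore, Dd, tau, fv, Sp, Tset, hab, hab.symm, hac, hac.symm, had, had.symm, hae, hae.symm, hbc, hbc.symm, hbd, hbd.symm, hbe, hbe.symm, hcd, hcd.symm, hce, hce.symm, hde, hde.symm, Prod.ext_iff]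
            rw [e1, htv]
        · exact ⟨⟨hab.symm, hb, hb', ha, ha'⟩, hvE, rfl, rfl⟩
    · exact absurd rfl hv12
    · have htv : tau n a b c d e (b, c) = Tset a b c := by simp [Dcore, tcore, Dd, tau, fv, Sp, Tset, hab, hab.symm, hac, hac.symm, had, had.symm, hae, hae.symm, hbc, hbc.symm, hbd, hbd.symm, hbe, hbe.symm, hcd, hcd.symm, hce, hce.symm, hde, hde.symm, Prod.ext_iff]
      refine ⟨?_, ?_, (a, b), ?_, ?_, ?_, ?_⟩
      · rw [htv]; simp [Tset]
      · rw [htv]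
        exact ⟨a, b, c, hab, hbc, hac, ha, ha', hb, hb', hc, hc', rfl⟩
      · rw [htv]; simp [Tset]
      · exact ⟨hab, ha, ha', hb, hb'⟩
      · have e1 : Dd a b c d e (a, b) = 0 := by simp [Dcore, tcore, Dd, tau, fv, Sp, Tset, hab, hab.symm, hac, hac.symm, had, had.symm, hae, hae.symm, hbc, hbc.symm, hbd, hbd.symm, hbe, hbe.symm, hcd, hcd.symm, hce, hce.symm, hde, hde.symm, Prod.ext_iff]
        have e2 : Dd a b c d e (b, c) = 1 := by simp [Dcore, tcore, Dd, tau, fv, Sp, Tset, hab, hab.symm, hac, hac.symm, had, had.symm, hae, hae.symm, hbc, hbc.symm, hbd, hbd.symm, hbe, hbe.symm, hcd, hcd.symm, hce, hce.symm, hde, hde.symm, Prod.ext_iff]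
        omega
      · intro w hw hwA
        rw [htv] at hw
        simp only [Tset, Set.mem_insert_iff, Set.mem_singleton_iff] at hw
        rcases hw with rfl | rfl | rfl
        · exact absurd rfl hwA
        · exact ⟨⟨hbc, hb, hb', hc, hc'⟩, hvE, rfl, rfl⟩
        · refine ⟨⟨hac.symm, hc, hc', ha, ha'⟩, ?_, ?_, ?_⟩
          · simp [Dcore, tcore, Dd, tau, fv, Sp, Tset, hab, hab.symm, hac, hac.symm, had, had.symm, hae, hae.symm, hbc, hbc.symm, hbd, hbd.symm, hbe, hbe.symm, hcd, hcd.symm, hce, hce.symm, hde, hde.symm, Prod.ext_iff]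
          · have e1 : Dd a b c d e (c, a) = 1 := by simp [Dcore, tcore, Dd, tau, fv, Sp, Tset, hab, hab.symm, hac, hac.symm, had, had.symm, hae, hae.symm, hbc, hbc.symm, hbd, hbd.symm, hbe, hbe.symm, hcd, hcd.symm, hce, hce.symm, hde, hde.symm, Prod.ext_iff]
            have e2 : Dd a b c d e (b, c) = 1 := by simp [Dcore, tcore, Dd, tau, fv, Sp, Tset, hab, hab.symm, hac, hac.symm, had, had.symm, hae, hae.symm, hbc, hbc.symm, hbd, hbd.symm, hbe, hbe.symm, hcd, hcd.symm, hce, hce.symm, hde, hde.symm, Prod.ext_iff]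
            omega
          · have e1 : tau n a b c d e (c, a) = Tset a b c := by simp [Dcore, tcore, Dd, tau, fv, Sp, Tset, hab, hab.symm, hac, hac.symm, had, had.symm, hae, hae.symm, hbc, hbc.symm, hbd, hbd.symm, hbe, hbe.symm, hcd, hcd.symm, hce, hce.symm, hde, hde.symm, Prod.ext_iff]
            rw [e1, htv]
    · have htv : tau n a b c d e (b, d) = Tset a b d := by simp [Dcore, tcore, Dd, tau, fv, Sp, Tset, hab, hab.symm, hac, hac.symm, had, had.symm, hae, hae.symm, hbc, hbc.symm, hbd, hbd.symm, hbe, hbe.symm, hcd, hcd.symm, hce, hce.symm, hde, hde.symm, Prod.ext_iff]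
      refine ⟨?_, ?_, (a, b), ?_, ?_, ?_, ?_⟩
      · rw [htv]; simp [Tset]
      · rw [htv]
        exact ⟨a, b, d, hab, hbd, had, ha, ha', hb, hb', hd, hd', rfl⟩
      · rw [htv]; simp [Tset]
      · exact ⟨hab, ha, ha', hb, hb'⟩
      · have e1 : Dd a b c d e (a, b) = 0 := by simp [Dcore, tcore, Dd, tau, fv, Sp, Tset, hab, hab.symm, hac, hac.symm, had, had.symm, hae, hae.symm, hbc, hbc.symm, hbd, hbd.symm, hbe, hbe.symm, hcd, hcd.symm, hce, hce.symm, hde, hde.symm, Prod.ext_iff]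
        have e2 : Dd a b c d e (b, d) = 2 := by simp [Dcore, tcore, Dd, tau, fv, Sp, Tset, hab, hab.symm, hac, hac.symm, had, had.symm, hae, hae.symm, hbc, hbc.symm, hbd, hbd.symm, hbe, hbe.symm, hcd, hcd.symm, hce, hce.symm, hde, hde.symm, Prod.ext_iff]
        omega
      · intro w hw hwA
        rw [htv] at hw
        simp only [Tset, Set.mem_insert_iff, Set.mem_singleton_iff] at hw
        rcases hw with rfl | rfl | rfl
        · exact absurd rfl hwA
        · exact ⟨⟨hbd, hb, hb', hd, hd'⟩, hvE, rfl, rfl⟩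
        · refine ⟨⟨had.symm, hd, hd', ha, ha'⟩, ?_, ?_, ?_⟩
          · simp [Dcore, tcore, Dd, tau, fv, Sp, Tset, hab, hab.symm, hac, hac.symm, had, had.symm, hae, hae.symm, hbc, hbc.symm, hbd, hbd.symm, hbe, hbe.symm, hcd, hcd.symm, hce, hce.symm, hde, hde.symm, Prod.ext_iff]
          · have e1 : Dd a b c d e (d, a) = 2 := by simp [Dcore, tcore, Dd, tau, fv, Sp, Tset, hab, hab.symm, hac, hac.symm, had, had.symm, hae, hae.symm, hbc, hbc.symm, hbd, hbd.symm, hbe, hbe.symm, hcd, hcd.symm, hce, hce.symm, hde, hde.symm, Prod.ext_iff]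
            have e2 : Dd a b c d e (b, d) = 2 := by simp [Dcore, tcore, Dd, tau, fv, Sp, Tset, hab, hab.symm, hac, hac.symm, had, had.symm, hae, hae.symm, hbc, hbc.symm, hbd, hbd.symm, hbe, hbe.symm, hcd, hcd.symm, hce, hce.symm, hde, hde.symm, Prod.ext_iff]
            omega
          · have e1 : tau n a b c d e (d, a) = Tset a b d := by simp [Dcore, tcore, Dd, tau, fv, Sp, Tset, hab, hab.symm, hac, hac.symm, had, had.symm, hae, hae.symm, hbc, hbc.symm, hbd, hbd.symm, hbe, hbe.symm, hcd, hcd.symm, hce, hce.symm, hde, hde.symm, Prod.ext_iff]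
            rw [e1, htv]
    · exact absurd (show (b,e) ∈ Tset a b e ∪ Tset c d e by simp [Tset]) hvE
    · have htv : tau n a b c d e (c, a) = Tset a b c := by simp [Dcore, tcore, Dd, tau, fv, Sp, Tset, hab, hab.symm, hac, hac.symm, had, had.symm, hae, hae.symm, hbc, hbc.symm, hbd, hbd.symm, hbe, hbe.symm, hcd, hcd.symm, hce, hce.symm, hde, hde.symm, Prod.ext_iff]
      refine ⟨?_, ?_, (a, b), ?_, ?_, ?_, ?_⟩
      · rw [htv]; simp [Tset]
      · rw [htv]
        exact ⟨a, b, c, hab, hbc, hac, ha, ha', hb, hb', hc, hc', rfl⟩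
      · rw [htv]; simp [Tset]
      · exact ⟨hab, ha, ha', hb, hb'⟩
      · have e1 : Dd a b c d e (a, b) = 0 := by simp [Dcore, tcore, Dd, tau, fv, Sp, Tset, hab, hab.symm, hac, hac.symm, had, had.symm, hae, hae.symm, hbc, hbc.symm, hbd, hbd.symm, hbe, hbe.symm, hcd, hcd.symm, hce, hce.symm, hde, hde.symm, Prod.ext_iff]
        have e2 : Dd a b c d e (c, a) = 1 := by simp [Dcore, tcore, Dd, tau, fv, Sp, Tset, hab, hab.symm, hac, hac.symm, had, had.symm, hae, hae.symm, hbc, hbc.symm, hbd, hbd.symm, hbe, hbe.symm, hcd, hcd.symm, hce, hce.symm, hde, hde.symm, Prod.ext_iff]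
        omega
      · intro w hw hwA
        rw [htv] at hw
        simp only [Tset, Set.mem_insert_iff, Set.mem_singleton_iff] at hw
        rcases hw with rfl | rfl | rfl
        · exact absurd rfl hwA
        · refine ⟨⟨hbc, hb, hb', hc, hc'⟩, ?_, ?_, ?_⟩
          · simp [Dcore, tcore, Dd, tau, fv, Sp, Tset, hab, hab.symm, hac, hac.symm, had, had.symm, hae, hae.symm, hbc, hbc.symm, hbd, hbd.symm, hbe, hbe.symm, hcd, hcd.symm, hce, hce.symm, hde, hde.symm, Prod.ext_iff]
          · have e1 : Dd a b c d e (b, c) = 1 := by simp [Dcore, tcore, Dd, tau, fv, Sp, Tset, hab, hab.symm, hac, hac.symm, had, had.symm, hae, hae.symm, hbc, hbc.symm, hbd, hbd.symm, hbe, hbe.symm, hcd, hcd.symm, hce, hce.symm, hde, hde.symm, Prod.ext_iff]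
            have e2 : Dd a b c d e (c, a) = 1 := by simp [Dcore, tcore, Dd, tau, fv, Sp, Tset, hab, hab.symm, hac, hac.symm, had, had.symm, hae, hae.symm, hbc, hbc.symm, hbd, hbd.symm, hbe, hbe.symm, hcd, hcd.symm, hce, hce.symm, hde, hde.symm, Prod.ext_iff]
            omega
          · have e1 : tau n a b c d e (b, c) = Tset a b c := by simp [Dcore, tcore, Dd, tau, fv, Sp, Tset, hab, hab.symm, hac, hac.symm, had, had.symm, hae, hae.symm, hbc, hbc.symm, hbd, hbd.symm, hbe, hbe.symm, hcd, hcd.symm, hce, hce.symm, hde, hde.symm, Prod.ext_iff]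
            rw [e1, htv]
        · exact ⟨⟨hac.symm, hc, hc', ha, ha'⟩, hvE, rfl, rfl⟩
    · have htv : tau n a b c d e (c, b) = Tset a c b := by simp [Dcore, tcore, Dd, tau, fv, Sp, Tset, hab, hab.symm, hac, hac.symm, had, had.symm, hae, hae.symm, hbc, hbc.symm, hbd, hbd.symm, hbe, hbe.symm, hcd, hcd.symm, hce, hce.symm, hde, hde.symm, Prod.ext_iff]
      refine ⟨?_, ?_, (a, c), ?_, ?_, ?_, ?_⟩
      · rw [htv]; simp [Tset]
      · rw [htv]
        exact ⟨a, c, b, hac, hbc.symm, hab, ha, ha', hc, hc', hb, hb', rfl⟩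
      · rw [htv]; simp [Tset]
      · exact ⟨hac, ha, ha', hc, hc'⟩
      · have e1 : Dd a b c d e (a, c) = 3 := by simp [Dcore, tcore, Dd, tau, fv, Sp, Tset, hab, hab.symm, hac, hac.symm, had, had.symm, hae, hae.symm, hbc, hbc.symm, hbd, hbd.symm, hbe, hbe.symm, hcd, hcd.symm, hce, hce.symm, hde, hde.symm, Prod.ext_iff]
        have e2 : Dd a b c d e (c, b) = 4 := by simp [Dcore, tcore, Dd, tau, fv, Sp, Tset, hab, hab.symm, hac, hac.symm, had, had.symm, hae, hae.symm, hbc, hbc.symm, hbd, hbd.symm, hbe, hbe.symm, hcd, hcd.symm, hce, hce.symm, hde, hde.symm, Prod.ext_iff]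
        omega
      · intro w hw hwA
        rw [htv] at hw
        simp only [Tset, Set.mem_insert_iff, Set.mem_singleton_iff] at hw
        rcases hw with rfl | rfl | rfl
        · exact absurd rfl hwA
        · exact ⟨⟨hbc.symm, hc, hc', hb, hb'⟩, hvE, rfl, rfl⟩
        · refine ⟨⟨hab.symm, hb, hb', ha, ha'⟩, ?_, ?_, ?_⟩
          · simp [Dcore, tcore, Dd, tau, fv, Sp, Tset, hab, hab.symm, hac, hac.symm, had, had.symm, hae, hae.symm, hbc, hbc.symm, hbd, hbd.symm, hbe, hbe.symm, hcd, hcd.symm, hce, hce.symm, hde, hde.symm, Prod.ext_iff]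
          · have e1 : Dd a b c d e (b, a) = 4 := by simp [Dcore, tcore, Dd, tau, fv, Sp, Tset, hab, hab.symm, hac, hac.symm, had, had.symm, hae, hae.symm, hbc, hbc.symm, hbd, hbd.symm, hbe, hbe.symm, hcd, hcd.symm, hce, hce.symm, hde, hde.symm, Prod.ext_iff]
            have e2 : Dd a b c d e (c, b) = 4 := by simp [Dcore, tcore, Dd, tau, fv, Sp, Tset, hab, hab.symm, hac, hac.symm, had, had.symm, hae, hae.symm, hbc, hbc.symm, hbd, hbd.symm, hbe, hbe.symm, hcd, hcd.symm, hce, hce.symm, hde, hde.symm, Prod.ext_iff]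
            omega
          · have e1 : tau n a b c d e (b, a) = Tset a c b := by simp [Dcore, tcore, Dd, tau, fv, Sp, Tset, hab, hab.symm, hac, hac.symm, had, had.symm, hae, hae.symm, hbc, hbc.symm, hbd, hbd.symm, hbe, hbe.symm, hcd, hcd.symm, hce, hce.symm, hde, hde.symm, Prod.ext_iff]
            rw [e1, htv]
    · exact absurd rfl hv12
    · exact absurd (show (c,d) ∈ Tset a b e ∪ Tset c d e by simp [Tset]) hvE
    · have htv : tau n a b c d e (c, e) = Tset a c e := by simp [Dcore, tcore, Dd, tau, fv, Sp, Tset, hab, hab.symm, hac, hac.symm, had, had.symm, hae, hae.symm, hbc, hbc.symm, hbd, hbd.symm, hbe, hbe.symm, hcd, hcd.symm, hce, hce.symm, hde, hde.symm, Prod.ext_iff]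
      refine ⟨?_, ?_, (e, a), ?_, ?_, ?_, ?_⟩
      · rw [htv]; simp [Tset]
      · rw [htv]
        exact ⟨a, c, e, hac, hce, hae, ha, ha', hc, hc', he, he', rfl⟩
      · rw [htv]; simp [Tset]
      · exact ⟨hae.symm, he, he', ha, ha'⟩
      · have e1 : Dd a b c d e (e, a) = 0 := by simp [Dcore, tcore, Dd, tau, fv, Sp, Tset, hab, hab.symm, hac, hac.symm, had, had.symm, hae, hae.symm, hbc, hbc.symm, hbd, hbd.symm, hbe, hbe.symm, hcd, hcd.symm, hce, hce.symm, hde, hde.symm, Prod.ext_iff]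
        have e2 : Dd a b c d e (c, e) = 3 := by simp [Dcore, tcore, Dd, tau, fv, Sp, Tset, hab, hab.symm, hac, hac.symm, had, had.symm, hae, hae.symm, hbc, hbc.symm, hbd, hbd.symm, hbe, hbe.symm, hcd, hcd.symm, hce, hce.symm, hde, hde.symm, Prod.ext_iff]
        omega
      · intro w hw hwA
        rw [htv] at hw
        simp only [Tset, Set.mem_insert_iff, Set.mem_singleton_iff] at hw
        rcases hw with rfl | rfl | rfl
        · refine ⟨⟨hac, ha, ha', hc, hc'⟩, ?_, ?_, ?_⟩
          · simp [Dcore, tcore, Dd, tau, fv, Sp, Tset, hab, hab.symm, hac, hac.symm, had, had.symm, hae, hae.symm, hbc, hbc.symm, hbd, hbd.symm, hbe, hbe.symm, hcd, hcd.symm, hce, hce.symm, hde, hde.symm, Prod.ext_iff]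
          · have e1 : Dd a b c d e (a, c) = 3 := by simp [Dcore, tcore, Dd, tau, fv, Sp, Tset, hab, hab.symm, hac, hac.symm, had, had.symm, hae, hae.symm, hbc, hbc.symm, hbd, hbd.symm, hbe, hbe.symm, hcd, hcd.symm, hce, hce.symm, hde, hde.symm, Prod.ext_iff]
            have e2 : Dd a b c d e (c, e) = 3 := by simp [Dcore, tcore, Dd, tau, fv, Sp, Tset, hab, hab.symm, hac, hac.symm, had, had.symm, hae, hae.symm, hbc, hbc.symm, hbd, hbd.symm, hbe, hbe.symm, hcd, hcd.symm, hce, hce.symm, hde, hde.symm, Prod.ext_iff]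
            omega
          · have e1 : tau n a b c d e (a, c) = Tset a c e := by simp [Dcore, tcore, Dd, tau, fv, Sp, Tset, hab, hab.symm, hac, hac.symm, had, had.symm, hae, hae.symm, hbc, hbc.symm, hbd, hbd.symm, hbe, hbe.symm, hcd, hcd.symm, hce, hce.symm, hde, hde.symm, Prod.ext_iff]
            rw [e1, htv]
        · exact ⟨⟨hce, hc, hc', he, he'⟩, hvE, rfl, rfl⟩
        · exact absurd rfl hwA
    · have htv : tau n a b c d e (d, a) = Tset a b d := by simp [Dcore, tcore, Dd, tau, fv, Sp, Tset, hab, hab.symm, hac, hac.symm, had, had.symm, hae, hae.symm, hbc, hbc.symm, hbd, hbd.symm, hbe, hbe.symm, hcd, hcd.symm, hce, hce.symm, hde, hde.symm, Prod.ext_iff]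
      refine ⟨?_, ?_, (a, b), ?_, ?_, ?_, ?_⟩
      · rw [htv]; simp [Tset]
      · rw [htv]
        exact ⟨a, b, d, hab, hbd, had, ha, ha', hb, hb', hd, hd', rfl⟩
      · rw [htv]; simp [Tset]
      · exact ⟨hab, ha, ha', hb, hb'⟩
      · have e1 : Dd a b c d e (a, b) = 0 := by simp [Dcore, tcore, Dd, tau, fv, Sp, Tset, hab, hab.symm, hac, hac.symm, had, had.symm, hae, hae.symm, hbc, hbc.symm, hbd, hbd.symm, hbe, hbe.symm, hcd, hcd.symm, hce, hce.symm, hde, hde.symm, Prod.ext_iff]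
        have e2 : Dd a b c d e (d, a) = 2 := by simp [Dcore, tcore, Dd, tau, fv, Sp, Tset, hab, hab.symm, hac, hac.symm, had, had.symm, hae, hae.symm, hbc, hbc.symm, hbd, hbd.symm, hbe, hbe.symm, hcd, hcd.symm, hce, hce.symm, hde, hde.symm, Prod.ext_iff]
        omega
      · intro w hw hwA
        rw [htv] at hw
        simp only [Tset, Set.mem_insert_iff, Set.mem_singleton_iff] at hw
        rcases hw with rfl | rfl | rfl
        · exact absurd rfl hwA
        · refine ⟨⟨hbd, hb, hb', hd, hd'⟩, ?_, ?_, ?_⟩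
          · simp [Dcore, tcore, Dd, tau, fv, Sp, Tset, hab, hab.symm, hac, hac.symm, had, had.symm, hae, hae.symm, hbc, hbc.symm, hbd, hbd.symm, hbe, hbe.symm, hcd, hcd.symm, hce, hce.symm, hde, hde.symm, Prod.ext_iff]
          · have e1 : Dd a b c d e (b, d) = 2 := by simp [Dcore, tcore, Dd, tau, fv, Sp, Tset, hab, hab.symm, hac, hac.symm, had, had.symm, hae, hae.symm, hbc, hbc.symm, hbd, hbd.symm, hbe, hbe.symm, hcd, hcd.symm, hce, hce.symm, hde, hde.symm, Prod.ext_iff]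
            have e2 : Dd a b c d e (d, a) = 2 := by simp [Dcore, tcore, Dd, tau, fv, Sp, Tset, hab, hab.symm, hac, hac.symm, had, had.symm, hae, hae.symm, hbc, hbc.symm, hbd, hbd.symm, hbe, hbe.symm, hcd, hcd.symm, hce, hce.symm, hde, hde.symm, Prod.ext_iff]
            omega
          · have e1 : tau n a b c d e (b, d) = Tset a b d := by simp [Dcore, tcore, Dd, tau, fv, Sp, Tset, hab, hab.symm, hac, hac.symm, had, had.symm, hae, hae.symm, hbc, hbc.symm, hbd, hbd.symm, hbe, hbe.symm, hcd, hcd.symm, hce, hce.symm, hde, hde.symm, Prod.ext_iff]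
            rw [e1, htv]
        · exact ⟨⟨had.symm, hd, hd', ha, ha'⟩, hvE, rfl, rfl⟩
    · have htv : tau n a b c d e (d, b) = Tset a d b := by simp [Dcore, tcore, Dd, tau, fv, Sp, Tset, hab, hab.symm, hac, hac.symm, had, had.symm, hae, hae.symm, hbc, hbc.symm, hbd, hbd.symm, hbe, hbe.symm, hcd, hcd.symm, hce, hce.symm, hde, hde.symm, Prod.ext_iff]
      refine ⟨?_, ?_, (b, a), ?_, ?_, ?_, ?_⟩
      · rw [htv]; simp [Tset]
      · rw [htv]
        exact ⟨a, d, b, had, hbd.symm, hab, ha, ha', hd, hd', hb, hb', rfl⟩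
      · rw [htv]; simp [Tset]
      · exact ⟨hab.symm, hb, hb', ha, ha'⟩
      · have e1 : Dd a b c d e (b, a) = 4 := by simp [Dcore, tcore, Dd, tau, fv, Sp, Tset, hab, hab.symm, hac, hac.symm, had, had.symm, hae, hae.symm, hbc, hbc.symm, hbd, hbd.symm, hbe, hbe.symm, hcd, hcd.symm, hce, hce.symm, hde, hde.symm, Prod.ext_iff]
        have e2 : Dd a b c d e (d, b) = 5 := by simp [Dcore, tcore, Dd, tau, fv, Sp, Tset, hab, hab.symm, hac, hac.symm, had, had.symm, hae, hae.symm, hbc, hbc.symm, hbd, hbd.symm, hbe, hbe.symm, hcd, hcd.symm, hce, hce.symm, hde, hde.symm, Prod.ext_iff]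
        omega
      · intro w hw hwA
        rw [htv] at hw
        simp only [Tset, Set.mem_insert_iff, Set.mem_singleton_iff] at hw
        rcases hw with rfl | rfl | rfl
        · refine ⟨⟨had, ha, ha', hd, hd'⟩, ?_, ?_, ?_⟩
          · simp [Dcore, tcore, Dd, tau, fv, Sp, Tset, hab, hab.symm, hac, hac.symm, had, had.symm, hae, hae.symm, hbc, hbc.symm, hbd, hbd.symm, hbe, hbe.symm, hcd, hcd.symm, hce, hce.symm, hde, hde.symm, Prod.ext_iff]
          · have e1 : Dd a b c d e (a, d) = 5 := by simp [Dcore, tcore, Dd, tau, fv, Sp, Tset, hab, hab.symm, hac, hac.symm, had, had.symm, hae, hae.symm, hbc, hbc.symm, hbd, hbd.symm, hbe, hbe.symm, hcd, hcd.symm, hce, hce.symm, hde, hde.symm, Prod.ext_iff]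
            have e2 : Dd a b c d e (d, b) = 5 := by simp [Dcore, tcore, Dd, tau, fv, Sp, Tset, hab, hab.symm, hac, hac.symm, had, had.symm, hae, hae.symm, hbc, hbc.symm, hbd, hbd.symm, hbe, hbe.symm, hcd, hcd.symm, hce, hce.symm, hde, hde.symm, Prod.ext_iff]
            omega
          · have e1 : tau n a b c d e (a, d) = Tset a d b := by simp [Dcore, tcore, Dd, tau, fv, Sp, Tset, hab, hab.symm, hac, hac.symm, had, had.symm, hae, hae.symm, hbc, hbc.symm, hbd, hbd.symm, hbe, hbe.symm, hcd, hcd.symm, hce, hce.symm, hde, hde.symm, Prod.ext_iff]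
            rw [e1, htv]
        · exact ⟨⟨hbd.symm, hd, hd', hb, hb'⟩, hvE, rfl, rfl⟩
        · exact absurd rfl hwA
    · have htv : tau n a b c d e (d, c) = Tset c e d := by simp [Dcore, tcore, Dd, tau, fv, Sp, Tset, hab, hab.symm, hac, hac.symm, had, had.symm, hae, hae.symm, hbc, hbc.symm, hbd, hbd.symm, hbe, hbe.symm, hcd, hcd.symm, hce, hce.symm, hde, hde.symm, Prod.ext_iff]
      refine ⟨?_, ?_, (c, e), ?_, ?_, ?_, ?_⟩
      · rw [htv]; simp [Tset]
      · rw [htv]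
        exact ⟨c, e, d, hce, hde.symm, hcd, hc, hc', he, he', hd, hd', rfl⟩
      · rw [htv]; simp [Tset]
      · exact ⟨hce, hc, hc', he, he'⟩
      · have e1 : Dd a b c d e (c, e) = 3 := by simp [Dcore, tcore, Dd, tau, fv, Sp, Tset, hab, hab.symm, hac, hac.symm, had, had.symm, hae, hae.symm, hbc, hbc.symm, hbd, hbd.symm, hbe, hbe.symm, hcd, hcd.symm, hce, hce.symm, hde, hde.symm, Prod.ext_iff]
        have e2 : Dd a b c d e (d, c) = 7 := by simp [Dcore, tcore, Dd, tau, fv, Sp, Tset, hab, hab.symm, hac, hac.symm, had, had.symm, hae, hae.symm, hbc, hbc.symm, hbd, hbd.symm, hbe, hbe.symm, hcd, hcd.symm, hce, hce.symm, hde, hde.symm, Prod.ext_iff]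
        omega
      · intro w hw hwA
        rw [htv] at hw
        simp only [Tset, Set.mem_insert_iff, Set.mem_singleton_iff] at hw
        rcases hw with rfl | rfl | rfl
        · exact absurd rfl hwA
        · refine ⟨⟨hde.symm, he, he', hd, hd'⟩, ?_, ?_, ?_⟩
          · simp [Dcore, tcore, Dd, tau, fv, Sp, Tset, hab, hab.symm, hac, hac.symm, had, had.symm, hae, hae.symm, hbc, hbc.symm, hbd, hbd.symm, hbe, hbe.symm, hcd, hcd.symm, hce, hce.symm, hde, hde.symm, Prod.ext_iff]
          · have e1 : Dd a b c d e (e, d) = 7 := by simp [Dcore, tcore, Dd, tau, fv, Sp, Tset, hab, hab.symm, hac, hac.symm, had, had.symm, hae, hae.symm, hbc, hbc.symm, hbd, hbd.symm, hbe, hbe.symm, hcd, hcd.symm, hce, hce.symm, hde, hde.symm, Prod.ext_iff]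
            have e2 : Dd a b c d e (d, c) = 7 := by simp [Dcore, tcore, Dd, tau, fv, Sp, Tset, hab, hab.symm, hac, hac.symm, had, had.symm, hae, hae.symm, hbc, hbc.symm, hbd, hbd.symm, hbe, hbe.symm, hcd, hcd.symm, hce, hce.symm, hde, hde.symm, Prod.ext_iff]
            omega
          · have e1 : tau n a b c d e (e, d) = Tset c e d := by simp [Dcore, tcore, Dd, tau, fv, Sp, Tset, hab, hab.symm, hac, hac.symm, had, had.symm, hae, hae.symm, hbc, hbc.symm, hbd, hbd.symm, hbe, hbe.symm, hcd, hcd.symm, hce, hce.symm, hde, hde.symm, Prod.ext_iff]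
            rw [e1, htv]
        · exact ⟨⟨hcd.symm, hd, hd', hc, hc'⟩, hvE, rfl, rfl⟩
    · exact absurd rfl hv12
    · exact absurd (show (d,e) ∈ Tset a b e ∪ Tset c d e by simp [Tset]) hvE
    · exact absurd (show (e,a) ∈ Tset a b e ∪ Tset c d e by simp [Tset]) hvE
    · have htv : tau n a b c d e (e, b) = Tset a e b := by simp [Dcore, tcore, Dd, tau, fv, Sp, Tset, hab, hab.symm, hac, hac.symm, had, had.symm, hae, hae.symm, hbc, hbc.symm, hbd, hbd.symm, hbe, hbe.symm, hcd, hcd.symm, hce, hce.symm, hde, hde.symm, Prod.ext_iff]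
      refine ⟨?_, ?_, (b, a), ?_, ?_, ?_, ?_⟩
      · rw [htv]; simp [Tset]
      · rw [htv]
        exact ⟨a, e, b, hae, hbe.symm, hab, ha, ha', he, he', hb, hb', rfl⟩
      · rw [htv]; simp [Tset]
      · exact ⟨hab.symm, hb, hb', ha, ha'⟩
      · have e1 : Dd a b c d e (b, a) = 4 := by simp [Dcore, tcore, Dd, tau, fv, Sp, Tset, hab, hab.symm, hac, hac.symm, had, had.symm, hae, hae.symm, hbc, hbc.symm, hbd, hbd.symm, hbe, hbe.symm, hcd, hcd.symm, hce, hce.symm, hde, hde.symm, Prod.ext_iff]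
        have e2 : Dd a b c d e (e, b) = 6 := by simp [Dcore, tcore, Dd, tau, fv, Sp, Tset, hab, hab.symm, hac, hac.symm, had, had.symm, hae, hae.symm, hbc, hbc.symm, hbd, hbd.symm, hbe, hbe.symm, hcd, hcd.symm, hce, hce.symm, hde, hde.symm, Prod.ext_iff]
        omega
      · intro w hw hwA
        rw [htv] at hw
        simp only [Tset, Set.mem_insert_iff, Set.mem_singleton_iff] at hw
        rcases hw with rfl | rfl | rfl
        · refine ⟨⟨hae, ha, ha', he, he'⟩, ?_, ?_, ?_⟩
          · simp [Dcore, tcore, Dd, tau, fv, Sp, Tset, hab, hab.symm, hac, hac.symm, had, had.symm, hae, hae.symm, hbc, hbc.symm, hbd, hbd.symm, hbe, hbe.symm, hcd, hcd.symm, hce, hce.symm, hde, hde.symm, Prod.ext_iff]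
          · have e1 : Dd a b c d e (a, e) = 6 := by simp [Dcore, tcore, Dd, tau, fv, Sp, Tset, hab, hab.symm, hac, hac.symm, had, had.symm, hae, hae.symm, hbc, hbc.symm, hbd, hbd.symm, hbe, hbe.symm, hcd, hcd.symm, hce, hce.symm, hde, hde.symm, Prod.ext_iff]
            have e2 : Dd a b c d e (e, b) = 6 := by simp [Dcore, tcore, Dd, tau, fv, Sp, Tset, hab, hab.symm, hac, hac.symm, had, had.symm, hae, hae.symm, hbc, hbc.symm, hbd, hbd.symm, hbe, hbe.symm, hcd, hcd.symm, hce, hce.symm, hde, hde.symm, Prod.ext_iff]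
            omega
          · have e1 : tau n a b c d e (a, e) = Tset a e b := by simp [Dcore, tcore, Dd, tau, fv, Sp, Tset, hab, hab.symm, hac, hac.symm, had, had.symm, hae, hae.symm, hbc, hbc.symm, hbd, hbd.symm, hbe, hbe.symm, hcd, hcd.symm, hce, hce.symm, hde, hde.symm, Prod.ext_iff]
            rw [e1, htv]
        · exact ⟨⟨hbe.symm, he, he', hb, hb'⟩, hvE, rfl, rfl⟩
        · exact absurd rfl hwA
    · exact absurd (show (e,c) ∈ Tset a b e ∪ Tset c d e by simp [Tset]) hvE
    · have htv : tau n a b c d e (e, d) = Tset c e d := by simp [Dcore, tcore, Dd, tau, fv, Sp, Tset, hab, hab.symm, hac, hac.symm, had, had.symm, hae, hae.symm, hbc, hbc.symm, hbd, hbd.symm, hbe, hbe.symm, hcd, hcd.symm, hce, hce.symm, hde, hde.symm, Prod.ext_iff]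
      refine ⟨?_, ?_, (c, e), ?_, ?_, ?_, ?_⟩
      · rw [htv]; simp [Tset]
      · rw [htv]
        exact ⟨c, e, d, hce, hde.symm, hcd, hc, hc', he, he', hd, hd', rfl⟩
      · rw [htv]; simp [Tset]
      · exact ⟨hce, hc, hc', he, he'⟩
      · have e1 : Dd a b c d e (c, e) = 3 := by simp [Dcore, tcore, Dd, tau, fv, Sp, Tset, hab, hab.symm, hac, hac.symm, had, had.symm, hae, hae.symm, hbc, hbc.symm, hbd, hbd.symm, hbe, hbe.symm, hcd, hcd.symm, hce, hce.symm, hde, hde.symm, Prod.ext_iff]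
        have e2 : Dd a b c d e (e, d) = 7 := by simp [Dcore, tcore, Dd, tau, fv, Sp, Tset, hab, hab.symm, hac, hac.symm, had, had.symm, hae, hae.symm, hbc, hbc.symm, hbd, hbd.symm, hbe, hbe.symm, hcd, hcd.symm, hce, hce.symm, hde, hde.symm, Prod.ext_iff]
        omega
      · intro w hw hwA
        rw [htv] at hw
        simp only [Tset, Set.mem_insert_iff, Set.mem_singleton_iff] at hw
        rcases hw with rfl | rfl | rfl
        · exact absurd rfl hwA
        · exact ⟨⟨hde.symm, he, he', hd, hd'⟩, hvE, rfl, rfl⟩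
        · refine ⟨⟨hcd.symm, hd, hd', hc, hc'⟩, ?_, ?_, ?_⟩
          · simp [Dcore, tcore, Dd, tau, fv, Sp, Tset, hab, hab.symm, hac, hac.symm, had, had.symm, hae, hae.symm, hbc, hbc.symm, hbd, hbd.symm, hbe, hbe.symm, hcd, hcd.symm, hce, hce.symm, hde, hde.symm, Prod.ext_iff]
          · have e1 : Dd a b c d e (d, c) = 7 := by simp [Dcore, tcore, Dd, tau, fv, Sp, Tset, hab, hab.symm, hac, hac.symm, had, had.symm, hae, hae.symm, hbc, hbc.symm, hbd, hbd.symm, hbe, hbe.symm, hcd, hcd.symm, hce, hce.symm, hde, hde.symm, Prod.ext_iff]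
            have e2 : Dd a b c d e (e, d) = 7 := by simp [Dcore, tcore, Dd, tau, fv, Sp, Tset, hab, hab.symm, hac, hac.symm, had, had.symm, hae, hae.symm, hbc, hbc.symm, hbd, hbd.symm, hbe, hbe.symm, hcd, hcd.symm, hce, hce.symm, hde, hde.symm, Prod.ext_iff]
            omega
          · have e1 : tau n a b c d e (d, c) = Tset c e d := by simp [Dcore, tcore, Dd, tau, fv, Sp, Tset, hab, hab.symm, hac, hac.symm, had, had.symm, hae, hae.symm, hbc, hbc.symm, hbd, hbd.symm, hbe, hbe.symm, hcd, hcd.symm, hce, hce.symm, hde, hde.symm, Prod.ext_iff]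
            rw [e1, htv]
    · exact absurd rfl hv12
  · -- stage case
    have hfveq : ∀ x, 1 ≤ x → ¬ Sp a b c d e x → fv a b c d e x = x := by
      intro x _ hx; simp [fv, hx]
    have hfv0 : ∀ x, Sp a b c d e x → fv a b c d e x = 0 := by
      intro x hx; simp [fv, hx]
    have htri : fv a b c d e q < fv a b c d e p ∨ fv a b c d e p < fv a b c d e q := by
      rcases Nat.lt_trichotomy (fv a b c d e q) (fv a b c d e p) with h | h | h
      · exact Or.inl h
      · exfalso
        by_cases hp : Sp a b c d e p <;> by_cases hq : Sp a b c d e q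
        · exact hS ⟨hp, hq⟩
        · rw [hfv0 p hp, hfveq q hv2l hq] at h; omega
        · rw [hfveq p hv1l hp, hfv0 q hq] at h; omega
        · rw [hfveq p hv1l hp, hfveq q hv2l hq] at h; exact hv12 h.symm
      · exact Or.inr h
    rcases htri with hlt | hlt
    · -- stage p : v = (p, q), new pairs (p,q) and (g q, p), anchor (q, g q)
      have hpS : ¬ Sp a b c d e p := by
        intro hp; rw [hfv0 p hp] at hlt; omega
      have hfp : fv a b c d e p = p := hfveq p hv1l hpS
      have hfq : fv a b c d e q < p := by rw [hfp] at hlt; exact hlt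
      have hqP : q ∈ PS n a b c d e p := by
        refine ⟨⟨hv2l, hv2u⟩, hv12.symm, ?_⟩
        by_cases hq : Sp a b c d e q
        · exact Or.inl hq
        · exact Or.inr (by rw [hfveq q hv2l hq] at hfq; exact hfq)
      have hPnt : (PS n a b c d e p).Nontrivial := by
        refine ⟨a, ⟨⟨ha, ha'⟩, fun h => hpS (Or.inl h.symm), Or.inl (Or.inl rfl)⟩,
          b, ⟨⟨hb, hb'⟩, fun h => hpS (Or.inr (Or.inl h.symm)), Or.inl (Or.inr (Or.inl rfl))⟩, hab⟩
      have hg : (gp n a b c d e p).IsCycleOn (PS n a b c d e p) := gp_spec n a b c d e p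
      have hyP : gp n a b c d e p q ∈ PS n a b c d e p := hg.apply_mem_iff.mpr hqP
      obtain ⟨⟨hy1, hy2⟩, hyp, hySp⟩ := hyP
      have hyq : gp n a b c d e p q ≠ q := hg.apply_ne hPnt hqP
      have hfy : fv a b c d e (gp n a b c d e p q) < p := by
        rcases hySp with h | h
        · rw [hfv0 _ h]; omega
        · by_cases h2 : Sp a b c d e (gp n a b c d e p q)
          · rw [hfv0 _ h2]; omega
          · rw [hfveq _ hy1 h2]; exact h
      have htv : tau n a b c d e (p, q) = Tset p q (gp n a b c d e p q) := by
        simp only [tau]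
        rw [if_neg hS, if_pos hlt]
      have hDv : Dd a b c d e (p, q) = 100 + p := by
        simp only [Dd]
        rw [if_neg hS]
        omega
      refine ⟨?_, ?_, (q, gp n a b c d e p q), ?_, ?_, ?_, ?_⟩
      · rw [htv]; exact Set.mem_insert _ _
      · rw [htv]
        exact ⟨p, q, gp n a b c d e p q, hv12, hyq.symm, hyp.symm.symm.symm, hv1l, hv1u,
          hv2l, hv2u, hy1, hy2, rfl⟩
      · rw [htv]; simp [Tset]
      · exact ⟨hyq.symm, hv2l, hv2u, hy1, hy2⟩
      · rw [hDv]
        by_cases h2 : Sp a b c d e q ∧ Sp a b c d e (gp n a b c d e p q)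
        · have h3 : Dd a b c d e (q, gp n a b c d e p q) = Dcore a b c d e (q, gp n a b c d e p q) := by
            simp [Dd, h2]
          have h4 := Dcore_le a b c d e (q, gp n a b c d e p q)
          omega
        · have h3 : Dd a b c d e (q, gp n a b c d e p q)
              = 100 + max (fv a b c d e q) (fv a b c d e (gp n a b c d e p q)) := by
            simp only [Dd]; rw [if_neg h2]
          omega
      · intro w hw hwA
        rw [htv] at hw
        simp only [Tset, Set.mem_insert_iff, Set.mem_singleton_iff] at hw
        rcases hw with rfl | rfl | rfl
        · exact ⟨⟨hv12, hv1l, hv1u, hv2l, hv2u⟩, hvE, rfl, rfl⟩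
        · exact absurd rfl hwA
        · have hE0snd : ∀ w ∈ Tset a b e ∪ Tset c d e, Sp a b c d e w.2 := by
            rintro w (hw | hw) <;>
              simp only [Tset, Set.mem_insert_iff, Set.mem_singleton_iff] at hw <;>
              rcases hw with rfl | rfl | rfl <;> simp [Sp]
          have hc1 : ¬ (Sp a b c d e (gp n a b c d e p q) ∧ Sp a b c d e p) :=
            fun hh => hpS hh.2
          refine ⟨⟨hyp, hy1, hy2, hv1l, hv1u⟩, fun hmem => hpS (hE0snd _ hmem), ?_, ?_⟩
          · have h3 : Dd a b c d e (gp n a b c d e p q, p)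
                = 100 + max (fv a b c d e (gp n a b c d e p q)) (fv a b c d e p) := by
              simp only [Dd]; rw [if_neg hc1]
            omega
          · have hc2 : ¬ (fv a b c d e p < fv a b c d e (gp n a b c d e p q)) := by omega
            rw [htv]
            simp only [tau]
            rw [if_neg hc1, if_neg hc2]
            simp
    · -- stage q : v = (p, q), z = (gp q)⁻¹ p, triangle Tset q z p, anchor (z, p)
      have hqS : ¬ Sp a b c d e q := by
        intro hq; rw [hfv0 q hq] at hlt; omega
      have hfq : fv a b c d e q = q := hfveq q hv2l hqS
      have hfp : fv a b c d e p < q := by rw [hfq] at hlt; exact hlt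
      have hpP : p ∈ PS n a b c d e q := by
        refine ⟨⟨hv1l, hv1u⟩, hv12, ?_⟩
        by_cases hp : Sp a b c d e p
        · exact Or.inl hp
        · exact Or.inr (by rw [hfveq p hv1l hp] at hfp; exact hfp)
      have hPnt : (PS n a b c d e q).Nontrivial := by
        refine ⟨a, ⟨⟨ha, ha'⟩, fun h => hqS (Or.inl h.symm), Or.inl (Or.inl rfl)⟩,
          b, ⟨⟨hb, hb'⟩, fun h => hqS (Or.inr (Or.inl h.symm)), Or.inl (Or.inr (Or.inl rfl))⟩, hab⟩
      have hg : (gp n a b c d e q).IsCycleOn (PS n a b c d e q) := gp_spec n a b c d e q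
      have hzP : (gp n a b c d e q)⁻¹ p ∈ PS n a b c d e q := hg.inv.apply_mem_iff.mpr hpP
      obtain ⟨⟨hz1, hz2⟩, hzq, hzSp⟩ := hzP
      have hzp : (gp n a b c d e q)⁻¹ p ≠ p := hg.inv.apply_ne hPnt hpP
      have hfz : fv a b c d e ((gp n a b c d e q)⁻¹ p) < q := by
        rcases hzSp with h | h
        · rw [hfv0 _ h]; omega
        · by_cases h2 : Sp a b c d e ((gp n a b c d e q)⁻¹ p)
          · rw [hfv0 _ h2]; omega
          · rw [hfveq _ hz1 h2]; exact h
      have hnlt : ¬ (fv a b c d e q < fv a b c d e p) := by omega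
      have htv : tau n a b c d e (p, q) = Tset q ((gp n a b c d e q)⁻¹ p) p := by
        simp only [tau]
        rw [if_neg hS, if_neg hnlt]
      have hDv : Dd a b c d e (p, q) = 100 + q := by
        simp only [Dd]
        rw [if_neg hS]
        omega
      refine ⟨?_, ?_, ((gp n a b c d e q)⁻¹ p, p), ?_, ?_, ?_, ?_⟩
      · rw [htv]; simp [Tset]
      · rw [htv]
        exact ⟨q, (gp n a b c d e q)⁻¹ p, p, hzq.symm, hzp, hv12.symm, hv2l, hv2u,
          hz1, hz2, hv1l, hv1u, rfl⟩
      · rw [htv]; simp [Tset]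
      · exact ⟨hzp, hz1, hz2, hv1l, hv1u⟩
      · rw [hDv]
        by_cases h2 : Sp a b c d e ((gp n a b c d e q)⁻¹ p) ∧ Sp a b c d e p
        · have h3 : Dd a b c d e ((gp n a b c d e q)⁻¹ p, p)
              = Dcore a b c d e ((gp n a b c d e q)⁻¹ p, p) := by simp only [Dd]; rw [if_pos h2]
          have h4 := Dcore_le a b c d e ((gp n a b c d e q)⁻¹ p, p)
          omega
        · have h3 : Dd a b c d e ((gp n a b c d e q)⁻¹ p, p)
              = 100 + max (fv a b c d e ((gp n a b c d e q)⁻¹ p)) (fv a b c d e p) := by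
            simp only [Dd]; rw [if_neg h2]
          omega
      · intro w hw hwA
        rw [htv] at hw
        simp only [Tset, Set.mem_insert_iff, Set.mem_singleton_iff] at hw
        rcases hw with rfl | rfl | rfl
        · have hE0fst : ∀ w ∈ Tset a b e ∪ Tset c d e, Sp a b c d e w.1 := by
            rintro w (hw | hw) <;>
              simp only [Tset, Set.mem_insert_iff, Set.mem_singleton_iff] at hw <;>
              rcases hw with rfl | rfl | rfl <;> simp [Sp]
          have hc1 : ¬ (Sp a b c d e q ∧ Sp a b c d e ((gp n a b c d e q)⁻¹ p)) :=
            fun hh => hqS hh.1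
          refine ⟨⟨hzq.symm, hv2l, hv2u, hz1, hz2⟩, fun hmem => hqS (hE0fst _ hmem), ?_, ?_⟩
          · have h3 : Dd a b c d e (q, (gp n a b c d e q)⁻¹ p)
                = 100 + max (fv a b c d e q) (fv a b c d e ((gp n a b c d e q)⁻¹ p)) := by
              simp only [Dd]; rw [if_neg hc1]
            omega
          · have hc2 : fv a b c d e ((gp n a b c d e q)⁻¹ p) < fv a b c d e q := by omega
            rw [htv]
            simp only [tau]
            rw [if_neg hc1, if_pos hc2]
            simp
        · exact absurd rfl hwA
        · exact ⟨⟨hv12, hv1l, hv1u, hv2l, hv2u⟩, hvE, rfl, rfl⟩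

end Master



open SimpleGraph in
theorem tree_of_depth {V : Type*} (G : SimpleGraph V) (root : V) (depth : V → ℕ)
    (hroot : ∀ v, v ≠ root → ∃ u, G.Adj v u ∧ depth u < depth v)
    (huniq : ∀ v u w, G.Adj v u → G.Adj v w → depth u < depth v → depth w < depth v → u = w)
    (hne : ∀ v u, G.Adj v u → depth v ≠ depth u) :
    G.IsAcyclic ∧ G.Connected := by
  have : DecidableEq V := Classical.decEq V
  constructor
  · -- acyclic
    intro v c hc
    obtain ⟨u, hu⟩ : ∃ u, u ∈ c.support.argmax depth := by
      cases h : c.support.argmax depth with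
      | none => exact absurd (List.argmax_eq_none.mp h) (c.support_ne_nil)
      | some m => exact ⟨m, by simp [Option.mem_def]⟩
    have humem : u ∈ c.support := List.argmax_mem hu
    have hmax : ∀ w ∈ c.support, depth w ≤ depth u := fun w hw => List.le_of_mem_argmax hw hu
    set c' := c.rotate u humem with hc'def
    have hc' : c'.IsCycle := hc.rotate humem
    have hmax' : ∀ w ∈ c'.support.tail, depth w ≤ depth u := by
      intro w hw
      have := (c.support_rotate u humem).mem_iff.mp hw
      exact hmax w (List.mem_of_mem_tail this)
    clear_value c'
    cases c' with
    | nil => exact hc'.ne_nil rfl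
    | @cons _ x _ h q =>
      have hxu : u ≠ x := h.ne
      obtain ⟨y, h', q'', hq⟩ := Walk.exists_eq_cons_of_ne hxu q.reverse
      -- x and y are in the tail of the support of cons h q
      have hxmem : x ∈ q.support := q.start_mem_support
      have hymem : y ∈ q.support := by
        have : y ∈ q.reverse.support := by
          rw [hq, Walk.support_cons]
          exact List.mem_cons_of_mem _ q''.start_mem_support
        rwa [Walk.support_reverse, List.mem_reverse] at this
      have htail : (Walk.cons h q).support.tail = q.support := by
        rw [Walk.support_cons]; rfl
      have hdx : depth x < depth u :=
        lt_of_le_of_ne (hmax' x (htail ▸ hxmem)) (fun hh => hne u x h hh.symm)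
      have hdy : depth y < depth u :=
        lt_of_le_of_ne (hmax' y (htail ▸ hymem)) (fun hh => hne u y h' hh.symm)
      have hxy : x = y := huniq u x y h h' hdx hdy
      -- edge contradiction
      have hnodup : (Walk.cons h q).edges.Nodup := hc'.edges_nodup
      rw [Walk.edges_cons] at hnodup
      have hmem : s(u, y) ∈ q.edges := by
        have : s(u, y) ∈ q.reverse.edges := by
          rw [hq, Walk.edges_cons]; exact List.mem_cons_self
        rwa [Walk.edges_reverse, List.mem_reverse] at this
      rw [← hxy] at hmem
      exact (List.nodup_cons.mp hnodup).1 hmem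
  · -- connected
    have hreach : ∀ k v, depth v ≤ k → G.Reachable v root := by
      intro k
      induction k with
      | zero =>
        intro v hv
        by_cases h : v = root
        · exact h ▸ Reachable.refl _
        · obtain ⟨u, -, hlt⟩ := hroot v h; omega
      | succ k ih =>
        intro v hv
        by_cases h : v = root
        · exact h ▸ Reachable.refl _
        · obtain ⟨u, hadj, hlt⟩ := hroot v h
          exact (hadj.reachable).trans (ih u (by omega))
    rw [connected_iff]
    exact ⟨fun x y => (hreach (depth x) x le_rfl).trans (hreach (depth y) y le_rfl).symm, ⟨root⟩⟩


/-- For `n ≥ 5` and distinct `a,b,c,d,e ∈ {1,…,n}`, there is a connected acyclic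
hypergraph with vertex set `[n]^(2)` one of whose hyperedges is the 6-element set
`T(a,b,e) ∪ T(c,d,e)`, all other hyperedges being triangles. -/
theorem exists_hypergraph_with_six_edge (n : ℕ) (h5 : 5 ≤ n) (a b c d e : ℕ)
    (ha : 1 ≤ a) (ha' : a ≤ n) (hb : 1 ≤ b) (hb' : b ≤ n) (hc : 1 ≤ c) (hc' : c ≤ n)
    (hd : 1 ≤ d) (hd' : d ≤ n) (he : 1 ≤ e) (he' : e ≤ n)
    (hdist : [a, b, c, d, e].Pairwise (· ≠ ·)) :
    ∃ H : Set (Set (ℕ × ℕ)),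
      (Tset a b e ∪ Tset c d e) ∈ H ∧
      (∀ h ∈ H, h ≠ Tset a b e ∪ Tset c d e → IsTriangle n h) ∧
      (incGraph (PairsSet n) H).IsAcyclic ∧
      (incGraph (PairsSet n) H).Connected := by
  classical
  simp only [List.pairwise_cons, List.mem_cons, List.mem_singleton, List.not_mem_nil,
    or_false, forall_eq_or_imp, forall_eq] at hdist
  obtain ⟨⟨hab, hac, had, hae⟩, ⟨hbc, hbd, hbe⟩, ⟨hcd, hce⟩, hde, -⟩ := hdist
  have hmaster := master h5 ha ha' hb hb' hc hc' hd hd' he he' hab hac had hae hbc hbd hbe hcd hce hde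
  set E₀ : Set (ℕ × ℕ) := Tset a b e ∪ Tset c d e with hE₀def
  set Hs : Set (Set (ℕ × ℕ)) := insert E₀ (tau n a b c d e '' (PairsSet n \ E₀)) with hHsdef
  have hE0mem : E₀ ∈ Hs := Set.mem_insert _ _
  have hDE0 : ∀ u ∈ E₀, Dd a b c d e u = 0 := by
    rintro u (hu | hu) <;>
      simp only [Tset, Set.mem_insert_iff, Set.mem_singleton_iff] at hu <;>
      rcases hu with rfl | rfl | rfl <;>
      simp [Dd, Dcore, Sp, hab, hab.symm, hac, hac.symm, had, had.symm, hae, hae.symm, hbc, hbc.symm, hbd, hbd.symm, hbe, hbe.symm, hcd, hcd.symm, hce, hce.symm, hde, hde.symm, Prod.ext_iff]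
  have habE : (a, b) ∈ E₀ := Set.mem_union_left _ (Set.mem_insert _ _)
  have hDHE0 : DHf a b c d e E₀ = 0 :=
    DHf_eq (fun u hu => le_of_eq (hDE0 u hu)) ⟨(a, b), habE, hDE0 _ habE⟩
  have hDHtau : ∀ v ∈ PairsSet n, v ∉ E₀ →
      DHf a b c d e (tau n a b c d e v) = Dd a b c d e v := by
    intro v hv hvE
    obtain ⟨hmem, -, A, hA, -, hAD, hsib⟩ := hmaster v hv hvE
    refine DHf_eq ?_ ⟨v, hmem, rfl⟩
    intro u hu
    by_cases huA : u = A
    · subst huA; omega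
    · exact le_of_eq (hsib u hu huA).2.2.1
  have hU : ∀ h ∈ Hs, ∀ v, v ∈ h → DHf a b c d e h ≤ Dd a b c d e v →
      (v ∈ E₀ ∧ h = E₀) ∨ (v ∉ E₀ ∧ h = tau n a b c d e v) := by
    intro h hh v hv hle
    rcases Set.mem_insert_iff.mp hh with rfl | hh'
    · exact Or.inl ⟨hv, rfl⟩
    · obtain ⟨u, ⟨huP, huE⟩, rfl⟩ := hh'
      right
      rw [hDHtau u huP huE] at hle
      obtain ⟨-, -, A, hA, -, hAD, hsib⟩ := hmaster u huP huE
      by_cases hvA : v = A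
      · subst hvA; omega
      · obtain ⟨-, hvE, -, hteq⟩ := hsib v hv hvA
        exact ⟨hvE, hteq.symm⟩
  have htri : ∀ h ∈ Hs, h ≠ E₀ → IsTriangle n h := by
    intro h hh hne
    rcases Set.mem_insert_iff.mp hh with rfl | ⟨u, ⟨huP, huE⟩, rfl⟩
    · exact absurd rfl hne
    · exact (hmaster u huP huE).2.1
  set dep : (↥(PairsSet n) ⊕ ↥Hs) → ℕ :=
    Sum.elim (fun v => 2 * Dd a b c d e v.1 + 1) (fun h => 2 * DHf a b c d e h.1) with hdepdef
  have adjdef : ∀ x y, (incGraph (PairsSet n) Hs).Adj x y ↔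
      ((∃ v h, x = Sum.inl v ∧ y = Sum.inr h ∧ (v : ℕ × ℕ) ∈ (h : Set (ℕ × ℕ))) ∨
       (∃ v h, y = Sum.inl v ∧ x = Sum.inr h ∧ (v : ℕ × ℕ) ∈ (h : Set (ℕ × ℕ)))) :=
    fun _ _ => Iff.rfl
  have hne' : ∀ x y, (incGraph (PairsSet n) Hs).Adj x y → dep x ≠ dep y := by
    intro x y hxy
    replace hxy := (adjdef x y).mp hxy
    rcases hxy with ⟨v', h', rfl, rfl, -⟩ | ⟨v', h', rfl, rfl, -⟩ <;>
      simp only [hdepdef, Sum.elim_inl, Sum.elim_inr] <;> omega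
  have hroot' : ∀ x, x ≠ Sum.inr ⟨E₀, hE0mem⟩ →
      ∃ y, (incGraph (PairsSet n) Hs).Adj x y ∧ dep y < dep x := by
    intro x hx
    match x with
    | Sum.inl v =>
      by_cases hvE : (v : ℕ × ℕ) ∈ E₀
      · refine ⟨Sum.inr ⟨E₀, hE0mem⟩, (adjdef _ _).mpr (Or.inl ⟨v, ⟨E₀, hE0mem⟩, rfl, rfl, hvE⟩), ?_⟩
        simp only [hdepdef, Sum.elim_inl, Sum.elim_inr, hDHE0]
        omega
      · obtain ⟨hmem, -, -⟩ := hmaster v.1 v.2 hvE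
        have himg : tau n a b c d e v.1 ∈ Hs :=
          Set.mem_insert_iff.mpr (Or.inr ⟨v.1, ⟨v.2, hvE⟩, rfl⟩)
        refine ⟨Sum.inr ⟨_, himg⟩, (adjdef _ _).mpr (Or.inl ⟨v, ⟨_, himg⟩, rfl, rfl, hmem⟩), ?_⟩
        simp only [hdepdef, Sum.elim_inl, Sum.elim_inr]
        rw [hDHtau v.1 v.2 hvE]
        omega
    | Sum.inr h =>
      have hhE : (h : Set (ℕ × ℕ)) ≠ E₀ := fun hh => hx (congrArg Sum.inr (Subtype.ext hh))
      rcases Set.mem_insert_iff.mp h.2 with hE | ⟨u, ⟨huP, huE⟩, htu⟩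
      · exact absurd hE hhE
      · obtain ⟨-, -, A, hA, hAP, hAD, -⟩ := hmaster u huP huE
        refine ⟨Sum.inl ⟨A, hAP⟩,
          (adjdef _ _).mpr (Or.inr ⟨⟨A, hAP⟩, h, rfl, rfl, htu ▸ hA⟩), ?_⟩
        simp only [hdepdef, Sum.elim_inl, Sum.elim_inr]
        have h2 : DHf a b c d e h.1 = Dd a b c d e u := by
          rw [← htu, hDHtau u huP huE]
        omega
  have huniq' : ∀ x y z, (incGraph (PairsSet n) Hs).Adj x y →
      (incGraph (PairsSet n) Hs).Adj x z → dep y < dep x → dep z < dep x → y = z := by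
    intro x y z hxy hxz hdy hdz
    replace hxy := (adjdef x y).mp hxy
    replace hxz := (adjdef x z).mp hxz
    rcases hxy with ⟨v1, e1, hx1, hy1, hm1⟩ | ⟨v1, e1, hy1, hx1, hm1⟩ <;>
      rcases hxz with ⟨v2, e2, hx2, hz2, hm2⟩ | ⟨v2, e2, hz2, hx2, hm2⟩
    · -- x = inl v1 = inl v2, y = inr e1, z = inr e2
      subst hx1; subst hy1; subst hz2
      have hvv : v1 = v2 := Sum.inl.inj hx2
      subst hvv
      have h1 : DHf a b c d e e1.1 ≤ Dd a b c d e v1.1 := by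
        simp only [hdepdef, Sum.elim_inl, Sum.elim_inr] at hdy; omega
      have h2 : DHf a b c d e e2.1 ≤ Dd a b c d e v1.1 := by
        simp only [hdepdef, Sum.elim_inl, Sum.elim_inr] at hdz; omega
      rcases hU e1.1 e1.2 v1.1 hm1 h1 with ⟨hvE, he1⟩ | ⟨hvE, he1⟩ <;>
        rcases hU e2.1 e2.2 v1.1 hm2 h2 with ⟨hvE2, he2⟩ | ⟨hvE2, he2⟩
      · exact congrArg Sum.inr (Subtype.ext (he1.trans he2.symm))
      · exact absurd hvE hvE2
      · exact absurd hvE2 hvE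
      · exact congrArg Sum.inr (Subtype.ext (he1.trans he2.symm))
    · subst hx1; exact absurd hx2 (by simp)
    · subst hx1; exact absurd hx2 (by simp)
    · -- x = inr e1 = inr e2, y = inl v1, z = inl v2
      subst hx1; subst hy1; subst hz2
      have hee : e1 = e2 := Sum.inr.inj hx2
      subst hee
      have h1 : Dd a b c d e v1.1 < DHf a b c d e e1.1 := by
        simp only [hdepdef, Sum.elim_inl, Sum.elim_inr] at hdy; omega
      have h2 : Dd a b c d e v2.1 < DHf a b c d e e1.1 := by
        simp only [hdepdef, Sum.elim_inl, Sum.elim_inr] at hdz; omega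
      rcases Set.mem_insert_iff.mp e1.2 with hE | ⟨u, ⟨huP, huE⟩, htu⟩
      · rw [hE, hDHE0] at h1; omega
      · have hDH : DHf a b c d e e1.1 = Dd a b c d e u := by
          rw [← htu, hDHtau u huP huE]
        obtain ⟨-, -, A, hA, hAP, hAD, hsib⟩ := hmaster u huP huE
        rw [← htu] at hm1 hm2
        have hv1A : v1.1 = A := by
          by_cases hc1 : v1.1 = A
          · exact hc1
          · have := (hsib v1.1 hm1 hc1).2.2.1; omega
        have hv2A : v2.1 = A := by
          by_cases hc2 : v2.1 = A
          · exact hc2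
          · have := (hsib v2.1 hm2 hc2).2.2.1; omega
        exact congrArg Sum.inl (Subtype.ext (hv1A.trans hv2A.symm))
  obtain ⟨hacyc, hconn⟩ := tree_of_depth (incGraph (PairsSet n) Hs)
    (Sum.inr ⟨E₀, hE0mem⟩) dep hroot' huniq' hne'
  exact ⟨Hs, hE0mem, htri, hacyc, hconn⟩
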